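/- arXiv:2109.02142 — 4 statements merged into one kernel-verified Lean document; each statement's English description precedes it below -/
import Mathlib

section
/- Let G be a finite simple connected graph with vertex ordering α = (v_1, …, v_n) that is a strong elimination ordering. Let v_j be the highest-index neighbor of v_i and suppose i < j. Then N_i^2[v_i] ⊆ N_i[v_j]; that is, every vertex v_t with t ≥ i and d_G(v_i, v_t) ≤ 2 is adjacent to or equal to v_j and satisfies v_t ∈ N_i[v_j]. -/
variable {n : ℕ}

/-- `N_i[v]`: the part of the closed neighbourhood of `v` consisting of vertices
of index at least `i` (vertices are identified with their indices in the ordering). -/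
def NclGE (G : SimpleGraph (Fin n)) (i v : Fin n) : Set (Fin n) :=
  {u : Fin n | (u = v ∨ G.Adj v u) ∧ i ≤ u}

/-- The identity ordering `(v_1, …, v_n)` of `Fin n` is a strong elimination ordering of `G`:
for all `i ≤ j ≤ k`, if `v_j, v_k ∈ N_i[v_i]` then `N_i[v_j] ⊆ N_i[v_k]`. -/
def IsSEO (G : SimpleGraph (Fin n)) : Prop :=
  ∀ i j k : Fin n, i ≤ j → j ≤ k → j ∈ NclGE G i i → k ∈ NclGE G i i →
    NclGE G i j ⊆ NclGE G i k

/-- `N_i^2[v]`: the vertices of index at least `i` within distance two of `v`. -/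
def N2GE (G : SimpleGraph (Fin n)) (i v : Fin n) : Set (Fin n) :=
  {u : Fin n | i ≤ u ∧ G.dist v u ≤ 2}

theorem seo_dist_two_subset_nbhd_of_highest (G : SimpleGraph (Fin n))
    (hconn : G.Connected) (hSEO : IsSEO G)
    (i j : Fin n) (hij : i < j) (hadj : G.Adj i j)
    (hjmax : ∀ l : Fin n, G.Adj i l → l ≤ j) :
    N2GE G i i ⊆ NclGE G i j := by
  intro u hu
  obtain ⟨hiu, hdist⟩ := hu
  obtain ⟨p, hp⟩ := SimpleGraph.Reachable.exists_walk_length_eq_dist (hconn i u)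
  have hlen : p.length ≤ 2 := by rw [hp]; exact hdist
  cases p with
  | nil => exact ⟨Or.inr hadj.symm, hiu⟩
  | @cons _ w _ h q =>
    cases q with
    | nil =>
      -- one step: h : G.Adj i u
      have huj : u ≤ j := hjmax u h
      exact hSEO i u j hiu huj ⟨Or.inr h, hiu⟩ ⟨Or.inr hadj, hij.le⟩ ⟨Or.inl rfl, hiu⟩
    | cons h2 q2 =>
      cases q2 with
      | nil =>
        rcases le_total i w with hiw | hwi
        · have hwj : w ≤ j := hjmax w h
          exact hSEO i w j hiw hwj ⟨Or.inr h, hiw⟩ ⟨Or.inr hadj, hij.le⟩ ⟨Or.inr h2, hiu⟩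
        · have := hSEO w i u hwi hiu ⟨Or.inr h.symm, hwi⟩ ⟨Or.inr h2, le_trans hwi hiu⟩
            ⟨Or.inr hadj, le_trans hwi hij.le⟩
          exact ⟨this.1.imp (fun e => e.symm) (fun a => a.symm), hiu⟩
      | cons _ _ => simp at hlen
end

section
/- Let G be a finite simple connected graph with vertex ordering α = (v_1, …, v_n) that is a strong elimination ordering. If v_i v_j ∈ E(G) with i < j, then N_i^2[v_i] ⊆ N_i^2[v_j]; that is, every vertex v_t with t ≥ i and d_G(v_i, v_t) ≤ 2 also satisfies d_G(v_j, v_t) ≤ 2. -/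
variable {n : ℕ}

lemma dist_le_two_cases (G : SimpleGraph (Fin n)) (hconn : G.Connected) {a b : Fin n}
    (h : G.dist a b ≤ 2) : b = a ∨ G.Adj a b ∨ ∃ w, G.Adj a w ∧ G.Adj w b := by
  obtain ⟨p, hp⟩ := hconn.exists_walk_length_eq_dist a b
  rw [← hp] at h
  cases p with
  | nil => exact Or.inl rfl
  | cons h1 q =>
    cases q with
    | nil => exact Or.inr (Or.inl h1)
    | cons h2 q' =>
      cases q' with
      | nil => exact Or.inr (Or.inr ⟨_, h1, h2⟩)
      | cons h3 q'' => simp [SimpleGraph.Walk.length_cons] at h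

lemma dist_le_of_adj (G : SimpleGraph (Fin n)) {a b : Fin n} (h : G.Adj a b) :
    G.dist a b ≤ 1 := by
  simpa using SimpleGraph.dist_le h.toWalk

lemma dist_le_of_two (G : SimpleGraph (Fin n)) {a w b : Fin n} (h1 : G.Adj a w)
    (h2 : G.Adj w b) : G.dist a b ≤ 2 := by
  simpa using SimpleGraph.dist_le (SimpleGraph.Walk.cons h1 h2.toWalk)

theorem seo_dist_two_subset (G : SimpleGraph (Fin n))
    (hconn : G.Connected) (hSEO : IsSEO G)
    (i j : Fin n) (hij : i < j) (hadj : G.Adj i j) :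
    N2GE G i i ⊆ N2GE G i j := by
  intro t ht
  obtain ⟨hit, hdist⟩ := ht
  refine ⟨hit, ?_⟩
  have hjin : j ∈ NclGE G i i := ⟨Or.inr hadj, hij.le⟩
  rcases dist_le_two_cases G hconn hdist with rfl | hadjit | ⟨w, hiw, hwt⟩
  · -- t = i
    exact (dist_le_of_adj G hadj.symm).trans one_le_two
  · -- dist 1 : t adjacent to i
    have htin : t ∈ NclGE G i i := ⟨Or.inr hadjit, hit⟩
    rcases le_total t j with htj | hjt
    · have := hSEO i t j hit htj htin hjin ⟨Or.inl rfl, hit⟩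
      rcases this.1 with rfl | h
      · simp [SimpleGraph.dist_self]
      · exact (dist_le_of_adj G h).trans one_le_two
    · have := hSEO i j t hij.le hjt hjin htin ⟨Or.inl rfl, hij.le⟩
      rcases this.1 with rfl | h
      · simp [SimpleGraph.dist_self]
      · exact (dist_le_of_adj G h.symm).trans one_le_two
  · -- dist 2 via w
    rcases le_or_gt i w with hiwle | hwi
    · have hwin : w ∈ NclGE G i i := ⟨Or.inr hiw, hiwle⟩
      rcases le_total w j with hwj | hjw
      · have := hSEO i w j hiwle hwj hwin hjin ⟨Or.inr hwt, hit⟩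
        rcases this.1 with rfl | h
        · simp [SimpleGraph.dist_self]
        · exact (dist_le_of_adj G h).trans one_le_two
      · have := hSEO i j w hij.le hjw hjin hwin ⟨Or.inl rfl, hij.le⟩
        rcases this.1 with rfl | h
        · exact (dist_le_of_adj G hwt).trans one_le_two
        · exact dist_le_of_two G h.symm hwt
    · -- w < i : use SEO at index w with i ≤ t
      have hiin : i ∈ NclGE G w w := ⟨Or.inr hiw.symm, hwi.le⟩
      have htin : t ∈ NclGE G w w := ⟨Or.inr hwt, hwi.le.trans hit⟩
      have := hSEO w i t hwi.le hit hiin htin ⟨Or.inr hadj, hwi.le.trans hij.le⟩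
      rcases this.1 with rfl | h
      · simp [SimpleGraph.dist_self]
      · exact (dist_le_of_adj G h.symm).trans one_le_two
end

section
/- Let G be a finite simple connected graph with vertex ordering α = (v_1, …, v_n) that is a strong elimination ordering. Suppose v_i v_j ∈ E(G) with i < j, and let v_k be the highest-index neighbor of v_j. Then N_i^2[v_i] ⊆ N_i^2[v_k]; that is, every vertex v_t with t ≥ i and d_G(v_i, v_t) ≤ 2 also satisfies d_G(v_k, v_t) ≤ 2. -/
variable {n : ℕ}

private lemma dist_le_two_aux {G : SimpleGraph (Fin n)} {a b c : Fin n}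
    (h1 : a = b ∨ G.Adj a b) (h2 : b = c ∨ G.Adj b c) : G.dist a c ≤ 2 := by
  rcases h1 with rfl | h1 <;> rcases h2 with rfl | h2
  · simp [SimpleGraph.dist_self]
  · exact le_trans (SimpleGraph.dist_le h2.toWalk) (by simp)
  · exact le_trans (SimpleGraph.dist_le h1.toWalk) (by simp)
  · exact le_trans (SimpleGraph.dist_le (h1.toWalk.append h2.toWalk)) (by simp)

theorem seo_dist_two_subset_of_highest_of_neighbor (G : SimpleGraph (Fin n))
    (hconn : G.Connected) (hSEO : IsSEO G)
    (i j k : Fin n) (hij : i < j) (hadj : G.Adj i j)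
    (hjk : G.Adj j k) (hkmax : ∀ l : Fin n, G.Adj j l → l ≤ k) :
    N2GE G i i ⊆ N2GE G i k := by
  intro t ht
  obtain ⟨hit, hdist⟩ := ht
  have hik : i ≤ k := hkmax i hadj.symm
  refine ⟨hit, ?_⟩
  -- it suffices that t is in the closed neighbourhood of j
  have finish_j : (t = j ∨ G.Adj j t) → G.dist k t ≤ 2 := by
    intro h
    refine dist_le_two_aux (a := k) (b := j) (Or.inr hjk.symm) ?_
    rcases h with h | h
    · exact Or.inl h.symm
    · exact Or.inr h
  -- N_i[i] ⊆ N_i[j]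
  have hA : NclGE G i i ⊆ NclGE G i j :=
    hSEO i i j le_rfl hij.le ⟨Or.inl rfl, le_rfl⟩ ⟨Or.inr hadj, hij.le⟩
  obtain ⟨p, hp⟩ := hconn.exists_walk_length_eq_dist i t
  cases p with
  | nil =>
      -- t = i
      exact dist_le_two_aux (a := k) (b := j) (Or.inr hjk.symm) (Or.inr hadj.symm)
  | cons h q =>
    cases q with
    | nil =>
        -- t adjacent to i
        have ht' : t ∈ NclGE G i j := hA ⟨Or.inr h, hit⟩
        exact finish_j ht'.1
    | cons h' q' =>
      cases q' with
      | nil =>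
          -- path i — m — t
          rename_i m
          by_cases him : i ≤ m
          · by_cases hmj : m ≤ j
            · -- N_i[m] ⊆ N_i[j]
              have hsub : NclGE G i m ⊆ NclGE G i j :=
                hSEO i m j him hmj ⟨Or.inr h, him⟩ ⟨Or.inr hadj, hij.le⟩
              have ht' : t ∈ NclGE G i j := hsub ⟨Or.inr h', hit⟩
              exact finish_j ht'.1
            · have hjm : j ≤ m := le_of_not_ge hmj
              have hsub : NclGE G i j ⊆ NclGE G i m :=
                hSEO i j m hij.le hjm ⟨Or.inr hadj, hij.le⟩ ⟨Or.inr h, him⟩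
              have hk' : k ∈ NclGE G i m := hsub ⟨Or.inr hjk, hik⟩
              rcases hk'.1 with hkm | hkm
              · subst hkm
                exact dist_le_two_aux (Or.inl rfl) (Or.inr h')
              · exact dist_le_two_aux (Or.inr hkm.symm) (Or.inr h')
          · have hmi : m ≤ i := le_of_not_ge him
            have hmt : m ≤ t := le_trans hmi hit
            have hsub : NclGE G m i ⊆ NclGE G m t :=
              hSEO m i t hmi hit ⟨Or.inr h.symm, hmi⟩ ⟨Or.inr h', hmt⟩
            have hj' : j ∈ NclGE G m t := hsub ⟨Or.inr hadj, le_trans hmi hij.le⟩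
            rcases hj'.1 with hjt | hjt
            · exact finish_j (Or.inl hjt.symm)
            · exact finish_j (Or.inr hjt.symm)
      | cons h'' q'' =>
          -- walk too long
          exfalso
          simp only [SimpleGraph.Walk.length_cons] at hp
          omega
end

section
/- Let G be a finite simple connected graph with vertex ordering α = (v_1, …, v_n) that is a strong elimination ordering. Let v_j be the highest-index neighbor of v_i with j > i (so v_j ≠ v_i), and let v_k ∈ N_i[v_i] (i.e., v_k = v_i or v_k is a neighbor of v_i with k ≥ i). Then N_i^2[v_k] ⊆ N_i^2[v_j]; that is, every vertex v_r with r ≥ i and d_G(v_k, v_r) ≤ 2 also satisfies d_G(v_j, v_r) ≤ 2. -/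
variable {n : ℕ}

private lemma dist_le_one_of_adj {G : SimpleGraph (Fin n)} {a b : Fin n} (h : G.Adj a b) :
    G.dist a b ≤ 1 := by
  have := SimpleGraph.dist_le (SimpleGraph.Walk.cons h SimpleGraph.Walk.nil)
  simpa using this

private lemma dist_le_two_of_adj_adj {G : SimpleGraph (Fin n)} {a b c : Fin n}
    (h1 : G.Adj a b) (h2 : G.Adj b c) : G.dist a c ≤ 2 := by
  have := SimpleGraph.dist_le
    (SimpleGraph.Walk.cons h1 (SimpleGraph.Walk.cons h2 SimpleGraph.Walk.nil))
  simpa using this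

theorem seo_dist_two_nbhd_member_subset (G : SimpleGraph (Fin n))
    (hconn : G.Connected) (hSEO : IsSEO G)
    (i j k : Fin n) (hij : i < j) (hadj : G.Adj i j)
    (hjmax : ∀ l : Fin n, G.Adj i l → l ≤ j)
    (hk : k ∈ NclGE G i i) :
    N2GE G i k ⊆ N2GE G i j := by
  obtain ⟨hk1, hik⟩ := hk
  have hjmem : j ∈ NclGE G i i := ⟨Or.inr hadj, hij.le⟩
  have hkj : k ≤ j := by
    rcases hk1 with rfl | h
    · exact hij.le
    · exact hjmax k h
  have hsub : NclGE G i k ⊆ NclGE G i j := hSEO i k j hik hkj ⟨hk1, hik⟩ hjmem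
  -- membership in N_i[j] gives distance ≤ 1 from j
  have hNj : ∀ x : Fin n, x ∈ NclGE G i j → G.dist j x ≤ 1 := by
    intro x hx
    rcases hx.1 with rfl | h
    · simp [SimpleGraph.dist_self]
    · exact dist_le_one_of_adj h
  intro r hr
  obtain ⟨hir, hdkr⟩ := hr
  refine ⟨hir, ?_⟩
  obtain ⟨p, hp⟩ := (hconn k r).exists_walk_length_eq_dist
  have hplen : p.length ≤ 2 := hp ▸ hdkr
  cases p with
  | nil =>
    -- r = k
    exact le_trans (hNj _ (hsub ⟨Or.inl rfl, hir⟩)) one_le_two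
  | cons h q =>
    rename_i m
    cases q with
    | nil =>
      -- adj k r
      exact le_trans (hNj _ (hsub ⟨Or.inr h, hir⟩)) one_le_two
    | cons h' q' =>
      rename_i m2
      cases q' with
      | nil =>
        -- adj k m, adj m r  (here m2 = r)
        by_cases him : i ≤ m
        · have hm : m ∈ NclGE G i j := hsub ⟨Or.inr h, him⟩
          rcases hm.1 with rfl | hjm
          · exact le_trans (dist_le_one_of_adj h') one_le_two
          · exact dist_le_two_of_adj_adj hjm h'
        · push_neg at him
          have hmk : m ≤ k := (le_of_lt him).trans hik
          have hmr : m ≤ r := him.le.trans hir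
          have hkmem : k ∈ NclGE G m m := ⟨Or.inr h.symm, hmk⟩
          have hrmem : r ∈ NclGE G m m := ⟨Or.inr h', hmr⟩
          by_cases hkr : k ≤ r
          · have hsub2 : NclGE G m k ⊆ NclGE G m r := hSEO m k r hmk hkr hkmem hrmem
            have hi : i ∈ NclGE G m r := by
              refine hsub2 ⟨?_, him.le⟩
              rcases hk1 with rfl | hik'
              · exact Or.inl rfl
              · exact Or.inr hik'.symm
            rcases hi.1 with rfl | hri
            · exact le_trans (dist_le_one_of_adj hadj.symm) one_le_two
            · exact dist_le_two_of_adj_adj hadj.symm hri.symm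
          · push_neg at hkr
            have hsub2 : NclGE G m r ⊆ NclGE G m k :=
              hSEO m r k hmr hkr.le hrmem hkmem
            have hrk : r ∈ NclGE G m k := hsub2 ⟨Or.inl rfl, hmr⟩
            exact le_trans (hNj r (hsub ⟨hrk.1, hir⟩)) one_le_two
      | cons h'' q'' =>
        simp [SimpleGraph.Walk.length_cons] at hplen
end
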